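/- Let R be a commutative Noetherian ring, U an ultrafilter on I, and *R the ultrapower of R. For every finitely generated R-module M, the natural map M ⊗_R *R → *M, sending m ⊗ r to r·(diagonal image of m), is an isomorphism of *R-modules. -/

import Mathlib

open Filter TensorProduct

section

variable {ι : Type*} {R : Type*} [CommRing R] {M : Type*} [AddCommGroup M] [Module R M]
  {l : Filter ι}

instance germ_smulCommClass : SMulCommClass R (Filter.Germ l R) (Filter.Germ l M) :=
  ⟨fun a s x => by
    induction s using Filter.Germ.inductionOn with
    | h s =>
      induction x using Filter.Germ.inductionOn with
      | h x =>
        simp only [← Germ.coe_smul, ← Germ.coe_smul']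
        exact congrArg _ (funext fun i => smul_comm a (s i) (x i))⟩

instance germ_isScalarTower : IsScalarTower R (Filter.Germ l R) (Filter.Germ l M) :=
  ⟨fun a s x => by
    induction s using Filter.Germ.inductionOn with
    | h s =>
      induction x using Filter.Germ.inductionOn with
      | h x =>
        simp only [← Germ.coe_smul, ← Germ.coe_smul']
        exact congrArg _ (funext fun i => smul_assoc a (s i) (x i))⟩

/-- The natural `R`-linear map `M ⊗_R *R → *M`, sending `m ⊗ r` to `r · *m`, where
`*m = ↑m` is the image of `m` under the diagonal embedding. -/
noncomputable def naturalMap (l : Filter ι) (R : Type*) [CommRing R] (M : Type*)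
    [AddCommGroup M] [Module R M] :
    M ⊗[R] Filter.Germ l R →ₗ[R] Filter.Germ l M :=
  TensorProduct.lift <| LinearMap.mk₂ R
    (fun (m : M) (r : Filter.Germ l R) => r • (↑m : Filter.Germ l M))
    (fun m m' r => by
      try dsimp only
      rw [show ((m + m' : M) : Filter.Germ l M) = ↑m + ↑m' from rfl, smul_add])
    (fun a m r => by
      try dsimp only
      rw [Filter.Germ.const_smul]
      exact (smul_comm a r (↑m : Filter.Germ l M)).symm)
    (fun m r r' => by (try dsimp only); rw [add_smul])
    (fun a m r => by (try dsimp only); rw [smul_assoc])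

end

section Aux

open Filter TensorProduct

variable {ι : Type*} {R : Type*} [CommRing R] {M : Type*} [AddCommGroup M] [Module R M]
  {l : Filter ι}

lemma germ_coe_sum {k : ℕ} (h : Fin k → ι → M) :
    ((fun i => ∑ j, h j i : ι → M) : Filter.Germ l M) = ∑ j, (h j : Filter.Germ l M) := by
  classical
  induction (Finset.univ : Finset (Fin k)) using Finset.induction_on with
  | empty => simp; rfl
  | @insert a s hj ih =>
      rw [Finset.sum_insert hj, ← ih, ← Filter.Germ.coe_add]
      congr 1
      ext i
      simp [Finset.sum_insert hj]

lemma naturalMap_tmul (m : M) (r : Filter.Germ l R) :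
    naturalMap l R M (m ⊗ₜ[R] r) = r • (↑m : Filter.Germ l M) := by
  simp [naturalMap]

end Aux

/-- For a commutative Noetherian ring `R`, an ultrafilter `U` on `ι`, and a finitely
generated `R`-module `M`, the natural map `M ⊗_R *R → *M`, `m ⊗ r ↦ r·(*m)`, is an
isomorphism of `*R`-modules: it is bijective, and it is `*R`-linear with respect to the
`*R`-action on the right tensor factor. -/
theorem naturalMap_bijective {ι R M : Type*} [CommRing R] [IsNoetherianRing R]
    [AddCommGroup M] [Module R M] [Module.Finite R M] (U : Ultrafilter ι) :
    Function.Bijective (naturalMap (U : Filter ι) R M) ∧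
    ∀ (s r : Filter.Germ (U : Filter ι) R) (m : M),
      naturalMap (U : Filter ι) R M (m ⊗ₜ[R] (s * r)) =
        s • naturalMap (U : Filter ι) R M (m ⊗ₜ[R] r) := by
  classical
  set l : Filter ι := (U : Filter ι) with hl
  obtain ⟨k, f, hf⟩ := Module.Finite.exists_fin (R := R) (M := M)
  have hsurj : ∀ m : M, ∃ c : Fin k → R, ∑ j, c j • f j = m := fun m =>
    (Submodule.mem_span_range_iff_exists_fun R).mp (hf ▸ Submodule.mem_top)
  have hmul : ∀ (s r : Filter.Germ l R) (m : M),
      naturalMap l R M (m ⊗ₜ[R] (s * r)) = s • naturalMap l R M (m ⊗ₜ[R] r) := by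
    intro s r m
    rw [naturalMap_tmul, naturalMap_tmul, mul_smul]
  refine ⟨⟨?_, ?_⟩, hmul⟩
  · -- injective
    rw [injective_iff_map_eq_zero]
    -- every element can be written as ∑ j, f j ⊗ s j
    have hrep : ∀ x : M ⊗[R] Filter.Germ l R, ∃ s : Fin k → Filter.Germ l R,
        x = ∑ j, f j ⊗ₜ[R] s j := by
      intro x
      induction x with
      | zero => exact ⟨0, by simp⟩
      | tmul m r =>
          obtain ⟨c, hc⟩ := hsurj m
          refine ⟨fun j => c j • r, ?_⟩
          rw [← hc, TensorProduct.sum_tmul]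
          exact Finset.sum_congr rfl fun j _ => (TensorProduct.smul_tmul _ _ _)
      | add x y hx hy =>
          obtain ⟨s, hs⟩ := hx; obtain ⟨t, ht⟩ := hy
          exact ⟨s + t, by simp [hs, ht, TensorProduct.tmul_add, Finset.sum_add_distrib]⟩
    intro x hx
    obtain ⟨s, rfl⟩ := hrep x
    have hgs : ∀ j, ∃ gj : ι → R, (gj : Filter.Germ l R) = s j := fun j =>
      Quotient.exists_rep (s j)
    choose g hg using hgs
    -- the relation holds eventually
    have h0 : ∀ᶠ i in l, ∑ j, g j i • f j = 0 := by
      have h1 : naturalMap l R M (∑ j, f j ⊗ₜ[R] s j) = 0 := hx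
      rw [map_sum] at h1
      simp only [naturalMap_tmul] at h1
      have h2 : ((fun i => ∑ j, g j i • f j : ι → M) : Filter.Germ l M) = 0 := by
        rw [germ_coe_sum]
        rw [← h1]
        refine Finset.sum_congr rfl fun j _ => ?_
        rw [← hg j]
        exact (Filter.Germ.coe_smul' (g j) (fun _ => f j))
      rw [show (0 : Filter.Germ l M) = ((fun _ => 0 : ι → M) : Filter.Germ l M) from rfl,
        Filter.Germ.coe_eq] at h2
      exact h2
    -- the relation module is finitely generated
    let T : (Fin k → R) →ₗ[R] M :=
      { toFun := fun c => ∑ j, c j • f j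
        map_add' := fun a b => by simp [add_smul, Finset.sum_add_distrib]
        map_smul' := fun a b => by simp [Finset.smul_sum, smul_smul] }
    obtain ⟨p, v, hv⟩ := Submodule.fg_iff_exists_fin_generating_family.mp
      (IsNoetherian.noetherian (LinearMap.ker T))
    have hvker : ∀ t, T (v t) = 0 := fun t => by
      have : v t ∈ LinearMap.ker T := hv ▸ Submodule.subset_span (Set.mem_range_self t)
      exact this
    -- choose coefficients
    have hcex : ∀ i, (∑ j, g j i • f j = 0) →
        ∃ c : Fin p → R, ∑ t, c t • v t = fun j => g j i := by
      intro i hi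
      refine (Submodule.mem_span_range_iff_exists_fun R).mp ?_
      rw [hv]
      exact hi
    let c : ι → Fin p → R := fun i =>
      if h : ∑ j, g j i • f j = 0 then Classical.choose (hcex i h) else 0
    have hcspec : ∀ i, (∑ j, g j i • f j = 0) → ∑ t, c i t • v t = fun j => g j i := by
      intro i h
      simp only [c, dif_pos h]
      exact Classical.choose_spec (hcex i h)
    -- express each s j in terms of the germs of c
    have hsj : ∀ j, s j = ∑ t, v t j • (((fun i => c i t) : ι → R) : Filter.Germ l R) := by
      intro j
      rw [← hg j]
      have : (∑ t, v t j • (((fun i => c i t) : ι → R) : Filter.Germ l R))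
          = ((fun i => ∑ t, v t j • c i t : ι → R) : Filter.Germ l R) := by
        rw [germ_coe_sum (fun t i => v t j • c i t)]
        exact Finset.sum_congr rfl fun t _ => (Filter.Germ.coe_smul (v t j) (fun i => c i t)).symm
      rw [this, Filter.Germ.coe_eq]
      filter_upwards [h0] with i hi
      have := congrFun (hcspec i hi) j
      simp only [Finset.sum_apply, Pi.smul_apply, smul_eq_mul] at this ⊢
      rw [← this]
      exact Finset.sum_congr rfl fun t _ => mul_comm _ _
    -- conclude
    calc ∑ j, f j ⊗ₜ[R] s j
        = ∑ j, ∑ t, (v t j • f j) ⊗ₜ[R] (((fun i => c i t) : ι → R) : Filter.Germ l R) := by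
          refine Finset.sum_congr rfl fun j _ => ?_
          rw [hsj j, TensorProduct.tmul_sum]
          exact Finset.sum_congr rfl fun t _ => (TensorProduct.smul_tmul _ _ _).symm
      _ = ∑ t, (∑ j, v t j • f j) ⊗ₜ[R] (((fun i => c i t) : ι → R) : Filter.Germ l R) := by
          rw [Finset.sum_comm]
          exact Finset.sum_congr rfl fun t _ => (TensorProduct.sum_tmul _ _ _).symm
      _ = 0 := by
          refine Finset.sum_eq_zero fun t _ => ?_
          rw [show ∑ j, v t j • f j = T (v t) from rfl, hvker t, TensorProduct.zero_tmul]
  · -- surjective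
    intro y
    induction y using Filter.Germ.inductionOn with
    | h x =>
      choose cx hcx using fun i => hsurj (x i)
      refine ⟨∑ j, f j ⊗ₜ[R] (((fun i => cx i j) : ι → R) : Filter.Germ l R), ?_⟩
      rw [map_sum]
      simp only [naturalMap_tmul]
      have : ∀ j, (((fun i => cx i j) : ι → R) : Filter.Germ l R) • ((f j : M) : Filter.Germ l M)
          = ((fun i => cx i j • f j : ι → M) : Filter.Germ l M) :=
        fun j => (Filter.Germ.coe_smul' _ _).symm
      rw [Finset.sum_congr rfl fun j _ => this j, ← germ_coe_sum]
      rw [Filter.Germ.coe_eq]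
      filter_upwards with i using hcx i
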